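/- Let n ≥ 2 and let u be a C² function on an open set G ⊆ ℝⁿ \ {0} with nonvanishing gradient satisfying div(|∇u|^{n-2}∇u) = 0. Then v(x) = u(x/|x|²) satisfies div(|∇v|^{n-2}∇v) = 0 on the reflected domain G* = { x : x/|x|² ∈ G } (at points where ∇v ≠ 0). -/

import Mathlib

open Real
open scoped RealInnerProductSpace

/-- The `p`-Laplacian `div(|∇f|^(p-2) ∇f)` of `f`, computed classically as the trace of the
derivative of the vector field `y ↦ ‖∇f(y)‖^(p-2) • ∇f(y)`. -/
noncomputable def pLaplacian {n : ℕ} (p : ℝ) (f : EuclideanSpace ℝ (Fin n) → ℝ)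
    (x : EuclideanSpace ℝ (Fin n)) : ℝ :=
  LinearMap.trace ℝ (EuclideanSpace ℝ (Fin n))
    ((fderiv ℝ (fun y => ‖gradient f y‖ ^ (p - 2) • gradient f y) x).toLinearMap)

section Aux

variable {n : ℕ}

local notation "E" => EuclideanSpace ℝ (Fin n)

lemma trace_clm_smulRight (c : EuclideanSpace ℝ (Fin n) →L[ℝ] ℝ) (w : EuclideanSpace ℝ (Fin n)) :
    LinearMap.trace ℝ (EuclideanSpace ℝ (Fin n)) ((c.smulRight w).toLinearMap) = c w := by
  have h1 : ((c.smulRight w).toLinearMap : E →ₗ[ℝ] E)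
      = (LinearMap.toSpanSingleton ℝ E w) ∘ₗ (c.toLinearMap) := by
    ext h
    simp [LinearMap.toSpanSingleton_apply]
  rw [h1, LinearMap.trace_comp_comm']
  have h2 : (c.toLinearMap ∘ₗ LinearMap.toSpanSingleton ℝ E w) = c w • LinearMap.id := by
    ext r
    simp [LinearMap.toSpanSingleton_apply, mul_comm]
  rw [h2, map_smul, LinearMap.trace_id]
  simp

lemma fderiv_apply_inner (f : EuclideanSpace ℝ (Fin n) → ℝ) (y w : EuclideanSpace ℝ (Fin n)) :
    fderiv ℝ f y w = ⟪gradient f y, w⟫ := by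
  simp only [gradient]
  rw [← InnerProductSpace.toDual_apply_apply, LinearIsometryEquiv.apply_symm_apply]

noncomputable def dInv (z : EuclideanSpace ℝ (Fin n)) :
    EuclideanSpace ℝ (Fin n) →L[ℝ] EuclideanSpace ℝ (Fin n) :=
  (‖z‖ ^ 2)⁻¹ • ContinuousLinearMap.id ℝ (EuclideanSpace ℝ (Fin n))
    - (2 * ((‖z‖ ^ 2)⁻¹) ^ 2) • (innerSL ℝ z).smulRight z

lemma dInv_apply (z w : EuclideanSpace ℝ (Fin n)) :
    dInv z w = (‖z‖ ^ 2)⁻¹ • w - (2 * ((‖z‖ ^ 2)⁻¹) ^ 2 * ⟪z, w⟫) • z := by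
  simp [dInv, mul_smul, ContinuousLinearMap.smul_apply]

lemma hasFDerivAt_invFun {z : EuclideanSpace ℝ (Fin n)} (hz : z ≠ 0) :
    HasFDerivAt (fun y : EuclideanSpace ℝ (Fin n) => (‖y‖ ^ 2)⁻¹ • y) (dInv z) z := by
  have hK : ‖z‖ ^ 2 ≠ 0 := pow_ne_zero 2 (norm_ne_zero_iff.2 hz)
  have h1 : HasFDerivAt (fun y : E => ‖y‖ ^ 2) (2 • innerSL ℝ z) z :=
    (hasStrictFDerivAt_norm_sq z).hasFDerivAt
  have h2 : HasFDerivAt (fun y : E => (‖y‖ ^ 2)⁻¹)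
      ((-((‖z‖ ^ 2) ^ 2)⁻¹) • (2 • innerSL ℝ z)) z :=
    (hasDerivAt_inv hK).comp_hasFDerivAt z h1
  have h3 := h2.fun_smul (hasFDerivAt_id z)
  refine h3.congr_fderiv ?_
  refine ContinuousLinearMap.ext fun w => ?_
  simp only [dInv, ContinuousLinearMap.coe_smul', ContinuousLinearMap.coe_sub',
    ContinuousLinearMap.add_apply, ContinuousLinearMap.smul_apply,
    ContinuousLinearMap.coe_id', ContinuousLinearMap.smulRight_apply,
    innerSL_apply_apply, Pi.smul_apply, id_eq,
    ContinuousLinearMap.coe_sub, Pi.sub_apply]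
  rw [← inv_pow]
  simp only [smul_eq_mul]
  module

lemma dInv_symm (z w₁ w₂ : EuclideanSpace ℝ (Fin n)) :
    ⟪dInv z w₁, w₂⟫ = ⟪w₁, dInv z w₂⟫ := by
  rw [dInv_apply, dInv_apply]
  simp only [inner_sub_left, inner_sub_right, real_inner_smul_left, real_inner_smul_right]
  rw [real_inner_comm z w₁, real_inner_comm w₁ z]
  ring

lemma dInv_norm {z : EuclideanSpace ℝ (Fin n)} (hz : z ≠ 0)
    (w : EuclideanSpace ℝ (Fin n)) : ‖dInv z w‖ = (‖z‖ ^ 2)⁻¹ * ‖w‖ := by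
  have hK : (0:ℝ) < ‖z‖ ^ 2 := pow_pos (norm_pos_iff.2 hz) 2
  have hsq : ‖dInv z w‖ ^ 2 = ((‖z‖ ^ 2)⁻¹ * ‖w‖) ^ 2 := by
    rw [← real_inner_self_eq_norm_sq, dInv_apply]
    simp only [inner_sub_left, inner_sub_right, real_inner_smul_left, real_inner_smul_right]
    rw [real_inner_comm w z]
    rw [real_inner_self_eq_norm_sq z, real_inner_self_eq_norm_sq w]
    field_simp
    ring
  calc ‖dInv z w‖ = √(‖dInv z w‖ ^ 2) := (Real.sqrt_sq (norm_nonneg _)).symm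
    _ = √(((‖z‖ ^ 2)⁻¹ * ‖w‖) ^ 2) := by rw [hsq]
    _ = (‖z‖ ^ 2)⁻¹ * ‖w‖ :=
        Real.sqrt_sq (mul_nonneg (inv_nonneg.2 (by positivity)) (norm_nonneg _))

end Aux

set_option maxHeartbeats 2000000 in
theorem stmt_6 (n : ℕ) (hn : 2 ≤ n) (G : Set (EuclideanSpace ℝ (Fin n)))
    (hG : IsOpen G) (hG0 : (0 : EuclideanSpace ℝ (Fin n)) ∉ G)
    (u : EuclideanSpace ℝ (Fin n) → ℝ)
    (hu : ContDiffOn ℝ 2 u G)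
    (hug : ∀ x ∈ G, gradient u x ≠ 0)
    (huh : ∀ x ∈ G, pLaplacian (n : ℝ) u x = 0)
    (v : EuclideanSpace ℝ (Fin n) → ℝ)
    (hv : v = fun y => u ((‖y‖ ^ 2)⁻¹ • y))
    (x : EuclideanSpace ℝ (Fin n)) (hx : x ≠ 0) (hxG : (‖x‖ ^ 2)⁻¹ • x ∈ G)
    (hgv : gradient v x ≠ 0) :
    pLaplacian (n : ℝ) v x = 0 := by
  subst hv
  obtain ⟨m, rfl⟩ : ∃ m, n = m + 2 := ⟨n - 2, by omega⟩
  clear hn hgv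
  have hexp : ((m + 2 : ℕ) : ℝ) - 2 = ((m : ℕ) : ℝ) := by push_cast; ring
  -- the vector field for u, with natural number exponent
  set A : EuclideanSpace ℝ (Fin (m + 2)) → EuclideanSpace ℝ (Fin (m + 2)) :=
    fun y => ‖gradient u y‖ ^ m • gradient u y with hA
  have hlamu : (fun y => ‖gradient u y‖ ^ (((m + 2 : ℕ) : ℝ) - 2) • gradient u y) = A := by
    funext y; rw [hexp, Real.rpow_natCast]
  have hA0 : LinearMap.trace ℝ (EuclideanSpace ℝ (Fin (m + 2)))
      ((fderiv ℝ A ((‖x‖ ^ 2)⁻¹ • x)).toLinearMap) = 0 := by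
    have h := huh _ hxG
    unfold pLaplacian at h
    rwa [hlamu] at h
  have hAd : DifferentiableAt ℝ A ((‖x‖ ^ 2)⁻¹ • x) := by
    have hcd2 : ContDiffAt ℝ 2 u ((‖x‖ ^ 2)⁻¹ • x) := hu.contDiffAt (hG.mem_nhds hxG)
    have hfd1 : ContDiffAt ℝ 1 (fderiv ℝ u) ((‖x‖ ^ 2)⁻¹ • x) :=
      hcd2.fderiv_right (by norm_num)
    have hgrad1 : ContDiffAt ℝ 1 (gradient u) ((‖x‖ ^ 2)⁻¹ • x) := by
      have h := (((InnerProductSpace.toDual ℝ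
          (EuclideanSpace ℝ (Fin (m+2)))).symm.contDiff (n := 1)).contDiffAt).comp
          ((‖x‖ ^ 2)⁻¹ • x) hfd1
      exact h
    have hnz : gradient u ((‖x‖ ^ 2)⁻¹ • x) ≠ 0 := hug _ hxG
    have hnorm1 : ContDiffAt ℝ 1 (fun y => ‖gradient u y‖) ((‖x‖ ^ 2)⁻¹ • x) :=
      hgrad1.norm ℝ hnz
    exact ((hnorm1.pow m).smul hgrad1).differentiableAt one_ne_zero
  have hgradAt : ∀ z : EuclideanSpace ℝ (Fin (m+2)), z ≠ 0 → (‖z‖ ^ 2)⁻¹ • z ∈ G →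
      gradient (fun y => u ((‖y‖ ^ 2)⁻¹ • y)) z = dInv z (gradient u ((‖z‖ ^ 2)⁻¹ • z)) := by
    intro z hz hzG
    have hud : DifferentiableAt ℝ u ((‖z‖ ^ 2)⁻¹ • z) :=
      (hu.contDiffAt (hG.mem_nhds hzG)).differentiableAt two_ne_zero
    have hchain : HasFDerivAt (fun y => u ((‖y‖ ^ 2)⁻¹ • y))
        ((fderiv ℝ u ((‖z‖ ^ 2)⁻¹ • z)).comp (dInv z)) z := by
      have h0 := HasFDerivAt.comp (g := u) (f := fun y : EuclideanSpace ℝ (Fin (m+2)) =>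
        (‖y‖ ^ 2)⁻¹ • y) z (hud.hasFDerivAt) (hasFDerivAt_invFun hz)
      exact h0
    have hkey : (fderiv ℝ u ((‖z‖ ^ 2)⁻¹ • z)).comp (dInv z)
        = InnerProductSpace.toDual ℝ _ (dInv z (gradient u ((‖z‖ ^ 2)⁻¹ • z))) := by
      refine ContinuousLinearMap.ext fun w => ?_
      rw [ContinuousLinearMap.comp_apply, InnerProductSpace.toDual_apply_apply,
        fderiv_apply_inner, dInv_symm]
    have hg : HasGradientAt (fun y => u ((‖y‖ ^ 2)⁻¹ • y))
        (dInv z (gradient u ((‖z‖ ^ 2)⁻¹ • z))) z := by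
      rw [hasGradientAt_iff_hasFDerivAt]
      exact hkey ▸ hchain
    exact hg.gradient
  have hUopen : IsOpen {z : EuclideanSpace ℝ (Fin (m+2)) | z ≠ 0 ∧ (‖z‖ ^ 2)⁻¹ • z ∈ G} := by
    have hc : ContinuousOn (fun z : EuclideanSpace ℝ (Fin (m+2)) => (‖z‖ ^ 2)⁻¹ • z)
        {(0 : EuclideanSpace ℝ (Fin (m+2)))}ᶜ := by
      apply ContinuousOn.fun_smul
      · exact ((continuous_norm.pow 2).continuousOn).inv₀
          (fun z hz => pow_ne_zero 2 (norm_ne_zero_iff.2 (by simpa using hz)))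
      · exact continuousOn_id
    have h := hc.isOpen_inter_preimage isOpen_compl_singleton hG
    have heq : {z : EuclideanSpace ℝ (Fin (m+2)) | z ≠ 0 ∧ (‖z‖ ^ 2)⁻¹ • z ∈ G}
        = {(0 : EuclideanSpace ℝ (Fin (m+2)))}ᶜ
          ∩ (fun z : EuclideanSpace ℝ (Fin (m+2)) => (‖z‖ ^ 2)⁻¹ • z) ⁻¹' G := by
      ext z; simp [Set.mem_compl_iff]
    rwa [heq]
  set B : EuclideanSpace ℝ (Fin (m+2)) → EuclideanSpace ℝ (Fin (m+2)) :=
    fun z => A ((‖z‖ ^ 2)⁻¹ • z) with hB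
  set F : EuclideanSpace ℝ (Fin (m+2)) → EuclideanSpace ℝ (Fin (m+2)) :=
    fun z => ((‖z‖ ^ 2)⁻¹) ^ (m+1) • B z
      - (2 * ((‖z‖ ^ 2)⁻¹) ^ (m+2) * ⟪z, B z⟫) • z with hF
  have hWF : ∀ z ∈ {z : EuclideanSpace ℝ (Fin (m+2)) | z ≠ 0 ∧ (‖z‖ ^ 2)⁻¹ • z ∈ G},
      (fun y => ‖gradient (fun y' => u ((‖y'‖ ^ 2)⁻¹ • y')) y‖ ^ m
        • gradient (fun y' => u ((‖y'‖ ^ 2)⁻¹ • y')) y) z = F z := by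
    rintro z ⟨hz, hzG⟩
    simp only [hF, hB, hA]
    rw [hgradAt z hz hzG, dInv_norm hz, dInv_apply, mul_pow, real_inner_smul_right]
    match_scalars <;> ring
  have hmem : {z : EuclideanSpace ℝ (Fin (m+2)) | z ≠ 0 ∧ (‖z‖ ^ 2)⁻¹ • z ∈ G} ∈ nhds x :=
    hUopen.mem_nhds ⟨hx, hxG⟩
  have hfeq := Filter.EventuallyEq.fderiv_eq (𝕜 := ℝ)
    (Filter.eventuallyEq_of_mem hmem hWF)
  unfold pLaplacian
  have hlamv : (fun y => ‖gradient (fun y' => u ((‖y'‖ ^ 2)⁻¹ • y')) y‖ ^ (((m + 2 : ℕ) : ℝ) - 2)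
      • gradient (fun y' => u ((‖y'‖ ^ 2)⁻¹ • y')) y)
      = fun y => ‖gradient (fun y' => u ((‖y'‖ ^ 2)⁻¹ • y')) y‖ ^ m
        • gradient (fun y' => u ((‖y'‖ ^ 2)⁻¹ • y')) y := by
    funext y; rw [hexp, Real.rpow_natCast]
  rw [hlamv, hfeq]
  -- derivative of F at x
  set A' := fderiv ℝ A ((‖x‖ ^ 2)⁻¹ • x) with hA'def
  have hK : ‖x‖ ^ 2 ≠ 0 := pow_ne_zero 2 (norm_ne_zero_iff.2 hx)
  have hBd : HasFDerivAt B (A'.comp (dInv x)) x := by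
    have h0 := HasFDerivAt.comp (g := A) (f := fun y : EuclideanSpace ℝ (Fin (m+2)) =>
      (‖y‖ ^ 2)⁻¹ • y) x (hAd.hasFDerivAt) (hasFDerivAt_invFun hx)
    exact h0
  have hns : HasFDerivAt (fun z : EuclideanSpace ℝ (Fin (m+2)) => ‖z‖ ^ 2)
      (2 • innerSL ℝ x) x := (hasStrictFDerivAt_norm_sq x).hasFDerivAt
  set c₁ : EuclideanSpace ℝ (Fin (m+2)) →L[ℝ] ℝ :=
    (-((‖x‖ ^ 2) ^ 2)⁻¹) • (2 • innerSL ℝ x) with hc₁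
  have hs' : HasFDerivAt (fun z : EuclideanSpace ℝ (Fin (m+2)) => (‖z‖ ^ 2)⁻¹) c₁ x := by
    have h0 := (hasDerivAt_inv hK).comp_hasFDerivAt x hns
    exact h0
  have hf₁ : HasFDerivAt (fun z : EuclideanSpace ℝ (Fin (m+2)) => ((‖z‖ ^ 2)⁻¹) ^ (m+1))
      ((((m+1 : ℕ) : ℝ) * ((‖x‖ ^ 2)⁻¹) ^ (m+1-1)) • c₁) x := by
    have h0 := (hasDerivAt_pow (m+1) ((‖x‖ ^ 2)⁻¹)).comp_hasFDerivAt x hs'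
    exact h0
  have hp₂ : HasFDerivAt (fun z : EuclideanSpace ℝ (Fin (m+2)) => ((‖z‖ ^ 2)⁻¹) ^ (m+2))
      ((((m+2 : ℕ) : ℝ) * ((‖x‖ ^ 2)⁻¹) ^ (m+2-1)) • c₁) x := by
    have h0 := (hasDerivAt_pow (m+2) ((‖x‖ ^ 2)⁻¹)).comp_hasFDerivAt x hs'
    exact h0
  set DB := A'.comp (dInv x) with hDB
  have hφ : HasFDerivAt (fun z : EuclideanSpace ℝ (Fin (m+2)) => ⟪z, B z⟫)
      ((fderivInnerCLM ℝ (x, B x)).comp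
        ((ContinuousLinearMap.id ℝ (EuclideanSpace ℝ (Fin (m+2)))).prod DB)) x := by
    have h0 := HasFDerivAt.inner ℝ (hasFDerivAt_id x) hBd
    exact h0
  have hF' : HasFDerivAt F
      (((((‖x‖ ^ 2)⁻¹) ^ (m+1)) • DB
          + (((((m+1 : ℕ)) : ℝ) * ((‖x‖ ^ 2)⁻¹) ^ (m+1-1)) • c₁).smulRight (B x))
        - ((2 * ((‖x‖ ^ 2)⁻¹) ^ (m+2) * ⟪x, B x⟫)
              • ContinuousLinearMap.id ℝ (EuclideanSpace ℝ (Fin (m+2)))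
          + ((2 * ((‖x‖ ^ 2)⁻¹) ^ (m+2))
                • ((fderivInnerCLM ℝ (x, B x)).comp
                  ((ContinuousLinearMap.id ℝ (EuclideanSpace ℝ (Fin (m+2)))).prod DB))
             + ⟪x, B x⟫ • ((2:ℝ) • ((((m+2 : ℕ) : ℝ) * ((‖x‖ ^ 2)⁻¹) ^ (m+2-1)) • c₁))).smulRight x)) x := by
    exact (hf₁.smul hBd).sub (((hp₂.const_mul 2).mul hφ).smul (hasFDerivAt_id x))
  rw [hF'.fderiv]
  have htr_DB : LinearMap.trace ℝ (EuclideanSpace ℝ (Fin (m+2))) (DB.toLinearMap)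
      = -(2 * ((‖x‖ ^ 2)⁻¹) ^ 2) * ⟪x, A' x⟫ := by
    have h1 : DB = ((‖x‖ ^ 2)⁻¹) • A'
        - (2 * ((‖x‖ ^ 2)⁻¹) ^ 2) • (innerSL ℝ x).smulRight (A' x) := by
      refine ContinuousLinearMap.ext fun w => ?_
      rw [hDB, ContinuousLinearMap.comp_apply, dInv_apply]
      simp only [map_sub, map_smul, ContinuousLinearMap.coe_sub', Pi.sub_apply,
        ContinuousLinearMap.coe_smul', Pi.smul_apply,
        ContinuousLinearMap.smulRight_apply, innerSL_apply_apply]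
      module
    rw [h1]
    simp only [ContinuousLinearMap.coe_sub, ContinuousLinearMap.coe_smul,
      map_sub, map_smul, smul_eq_mul]
    rw [trace_clm_smulRight, hA0]
    simp only [innerSL_apply_apply]
    ring
  have hDBx : ⟪x, DB x⟫ = (((‖x‖ ^ 2)⁻¹) - 2 * ((‖x‖ ^ 2)⁻¹) ^ 2 * ‖x‖ ^ 2) * ⟪x, A' x⟫ := by
    rw [hDB, ContinuousLinearMap.comp_apply, dInv_apply, real_inner_self_eq_norm_sq]
    rw [map_sub, map_smul, map_smul]
    rw [inner_sub_right, real_inner_smul_right, real_inner_smul_right]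
    ring
  simp only [ContinuousLinearMap.coe_sub, ContinuousLinearMap.coe_add,
    ContinuousLinearMap.coe_smul, map_sub, map_add, map_smul, smul_eq_mul]
  rw [trace_clm_smulRight, trace_clm_smulRight, htr_DB, ContinuousLinearMap.coe_id,
    LinearMap.trace_id, finrank_euclideanSpace_fin]
  simp only [ContinuousLinearMap.add_apply, ContinuousLinearMap.smul_apply, smul_eq_mul,
    fderivInnerCLM_apply, ContinuousLinearMap.comp_apply, ContinuousLinearMap.prod_apply,
    ContinuousLinearMap.coe_id', id_eq, hc₁, innerSL_apply_apply, real_inner_self_eq_norm_sq]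
  rw [hDBx]
  rw [show m + 2 - 1 = m + 1 by omega, show m + 1 - 1 = m by omega]
  generalize ‖x‖ ^ 2 = N at hK ⊢
  field_simp
  have hN : N * N⁻¹ = 1 := mul_inv_cancel₀ hK
  push_cast
  linear_combination (N⁻¹ ^ m * (-(6 + 2 * (m : ℝ)) * ⟪x, B x⟫ * (N * N⁻¹) + 2 * ⟪x, A' x⟫ * N⁻¹
    + 2 * (1 + (m : ℝ)) * ⟪x, B x⟫)) * hN
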